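/- Let a be a positive integer with n = ⌊√a⌋, a = n^2+b (0 ≤ b ≤ 2n) and m = n+1, a = m^2−c (1 ≤ c ≤ 2m−1). If s ≤ max{ k·(n+√(a+1))/(b+1), k·(m+√a)/c }, then τ_s(a) < k, i.e., fewer than k positive integers t satisfy s^2·a < t^2 < s^2·(a+1). -/
import Mathlib

noncomputable def tauN (s a : ℕ) : ℕ := {t : ℕ | 0 < t ∧ s^2 * a < t^2 ∧ t^2 < s^2 * (a+1)}.ncard

set_option maxHeartbeats 1000000 in
theorem stmt_11 (a n b m c k s : ℕ) (ha : 0 < a) (hn : n = Nat.sqrt a)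
    (hab : a = n^2 + b) (hb : b ≤ 2*n) (hm : m = n + 1)
    (hac : a + c = m^2) (hc1 : 1 ≤ c) (hc2 : c ≤ 2*m - 1)
    (hk : 0 < k) (hs : 0 < s)
    (h : (s : ℝ) ≤ max (k * ((n : ℝ) + Real.sqrt (a+1)) / (b+1))
                       (k * ((m : ℝ) + Real.sqrt a) / c)) :
    tauN s a < k := by
  subst hm
  by_contra hlt
  push_neg at hlt
  have hn1 : 1 ≤ n := by
    rw [hn]; exact Nat.sqrt_pos.mpr ha
  have hma : a + 1 ≤ (n+1)^2 := by omega
  -- the finset version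
  set F : Finset ℕ := (Finset.Ioo (s*n) (s*(n+1))).filter
    (fun t => s^2*a < t^2 ∧ t^2 < s^2*(a+1)) with hF
  have hset : {t : ℕ | 0 < t ∧ s^2 * a < t^2 ∧ t^2 < s^2 * (a+1)} = ↑F := by
    ext t
    simp only [hF, Finset.coe_filter, Finset.mem_Ioo, Set.mem_setOf_eq]
    constructor
    · rintro ⟨ht0, h1, h2⟩
      refine ⟨⟨?_, ?_⟩, h1, h2⟩
      · by_contra hle
        push_neg at hle
        have : t^2 ≤ (s*n)^2 := Nat.pow_le_pow_left hle 2
        have : (s*n)^2 ≤ s^2*a := by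
          have : n^2 ≤ a := by omega
          calc (s*n)^2 = s^2*n^2 := by ring
          _ ≤ s^2*a := Nat.mul_le_mul_left _ this
        omega
      · by_contra hle
        push_neg at hle
        have h3 : (s*(n+1))^2 ≤ t^2 := Nat.pow_le_pow_left hle 2
        have h4 : s^2*(a+1) ≤ (s*(n+1))^2 := by
          calc s^2*(a+1) ≤ s^2*(n+1)^2 := Nat.mul_le_mul_left _ hma
          _ = (s*(n+1))^2 := by ring
        omega
    · rintro ⟨⟨h1, h2⟩, h3, h4⟩
      have h0 : 0 < s*n := Nat.mul_pos hs hn1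
      exact ⟨by omega, h3, h4⟩
  have hcard : k ≤ F.card := by
    rwa [tauN, hset, Set.ncard_coe_finset] at hlt
  have hne : F.Nonempty := Finset.card_pos.mp (lt_of_lt_of_le hk hcard)
  obtain ⟨L, M, hLmem, hMmem, hbound⟩ :
      ∃ Lv Mv, Lv ∈ F ∧ Mv ∈ F ∧ ∀ x ∈ F, Lv ≤ x ∧ x ≤ Mv :=
    ⟨F.min' hne, F.max' hne, F.min'_mem hne, F.max'_mem hne,
      fun x hx => ⟨F.min'_le x hx, F.le_max' x hx⟩⟩
  have hsub : F ⊆ Finset.Icc L M := fun x hx => Finset.mem_Icc.mpr (hbound x hx)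
  have hIcc : k ≤ M + 1 - L := by
    have h1 := Finset.card_le_card hsub
    rw [Nat.card_Icc] at h1
    omega
  rw [hF, Finset.mem_filter, Finset.mem_Ioo] at hLmem hMmem
  obtain ⟨⟨hL1, hL2⟩, hL3, hL4⟩ := hLmem
  obtain ⟨⟨hM1, hM2⟩, hM3, hM4⟩ := hMmem
  have hLMle : L ≤ M := (hbound L (by rw [hF, Finset.mem_filter, Finset.mem_Ioo]; exact ⟨⟨hL1, hL2⟩, hL3, hL4⟩)).2
  have hsm : s*(n+1) = s*n + s := by ring
  -- key nat bounds
  have hMge : s*n + k ≤ M := by omega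
  have hkm : k ≤ s*(n+1) := by omega
  have hLle : L ≤ s*(n+1) - k := by omega
  have hs' : k + 1 ≤ s := by omega
  have hAn : (s*n+k)^2 < s^2*(a+1) := lt_of_le_of_lt (Nat.pow_le_pow_left hMge 2) hM4
  have hBn : s^2*a < (s*(n+1) - k)^2 := lt_of_lt_of_le hL3 (Nat.pow_le_pow_left hLle 2)
  -- move to ℝ
  have hr1 : ((s:ℝ)*n + k)^2 < (s:ℝ)^2*((a:ℝ)+1) := by exact_mod_cast hAn
  have hr2 : (s:ℝ)^2*(a:ℝ) < ((s:ℝ)*((n:ℝ)+1) - k)^2 := by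
    rify [hkm] at hBn
    convert hBn using 2 <;> push_cast <;> ring
  have haR : (a:ℝ) = (n:ℝ)^2 + b := by exact_mod_cast hab
  have haC : (a:ℝ) = ((n:ℝ)+1)^2 - c := by
    have : (a:ℝ) + c = ((n:ℝ)+1)^2 := by exact_mod_cast hac
    linarith
  rw [haR] at hr1
  rw [haC] at hr2
  set q1 := Real.sqrt ((a:ℝ)+1) with hq1def
  set q2 := Real.sqrt (a:ℝ) with hq2def
  have hq1sq : q1^2 = (a:ℝ)+1 := Real.sq_sqrt (by positivity)
  have hq2sq : q2^2 = (a:ℝ) := Real.sq_sqrt (by positivity)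
  have hq1nn : (0:ℝ) ≤ q1 := Real.sqrt_nonneg _
  have hq2nn : (0:ℝ) ≤ q2 := Real.sqrt_nonneg _
  have hbnn : (0:ℝ) ≤ (b:ℝ) := Nat.cast_nonneg b
  have hnq1 : (n:ℝ) ≤ q1 := by
    rw [hq1def]
    exact (Real.le_sqrt (Nat.cast_nonneg n) (by positivity)).mpr (by rw [haR]; linarith)
  have hnq2 : (n:ℝ) ≤ q2 := by
    rw [hq2def]
    exact (Real.le_sqrt (Nat.cast_nonneg n) (by positivity)).mpr (by rw [haR]; linarith)
  clear_value q1 q2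
  have hk2q1 : (k:ℝ)^2 * q1^2 = (k:ℝ)^2 * ((n:ℝ)^2 + b + 1) := by rw [hq1sq, haR]
  have hk2q2 : (k:ℝ)^2 * q2^2 = (k:ℝ)^2 * (((n:ℝ)+1)^2 - c) := by rw [hq2sq, haC]
  have hbR0 : (0:ℝ) < (b:ℝ)+1 := by positivity
  have hcR0 : (0:ℝ) < (c:ℝ) := by exact_mod_cast hc1
  have hcR1 : (1:ℝ) ≤ (c:ℝ) := by exact_mod_cast hc1
  have hsr : (k:ℝ)+1 ≤ (s:ℝ) := by exact_mod_cast hs'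
  have hkR0 : (0:ℝ) ≤ (k:ℝ) := by positivity
  have hsR0 : (0:ℝ) < (s:ℝ) := by exact_mod_cast hs
  clear hset hsub hIcc hF hlt hcard hn hac hc2 hb hL1 hL2 hL3 hL4 hM1 hM2 hM3 hM4 hMge hkm hLle hAn hBn hLMle hsm hbound hne
  rcases le_max_iff.mp h with h1 | h2
  · -- case 1: s ≤ k(n+√(a+1))/(b+1)
    have hmul : (s:ℝ)*((b:ℝ)+1) ≤ (k:ℝ)*((n:ℝ) + q1) := (le_div_iff₀ hbR0).mp h1
    have hknq : (k:ℝ)*n ≤ (k:ℝ)*q1 := mul_le_mul_of_nonneg_left hnq1 hkR0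
    have hp1 : 0 ≤ (k:ℝ)*q1 - ((s:ℝ)*((b:ℝ)+1) - k*n) := by linarith [hmul]
    have hp2 : 0 ≤ (k:ℝ)*q1 + ((s:ℝ)*((b:ℝ)+1) - k*n) := by nlinarith [hknq, mul_pos hsR0 hbR0]
    nlinarith [mul_nonneg hp1 hp2, mul_pos hbR0 (sub_pos.mpr hr1), hk2q1]
  · -- case 2: s ≤ k(m+√a)/c
    have hmul : (s:ℝ)*(c:ℝ) ≤ (k:ℝ)*(((n:ℝ)+1) + q2) := by
      push_cast at h2
      exact (le_div_iff₀ hcR0).mp h2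
    rcases le_or_gt ((k:ℝ)*((n:ℝ)+1)) ((s:ℝ)*(c:ℝ)) with hcase | hcase
    · have hp1 : 0 ≤ (k:ℝ)*q2 - ((s:ℝ)*c - k*((n:ℝ)+1)) := by linarith [hmul]
      have hp2 : 0 ≤ (k:ℝ)*q2 + ((s:ℝ)*c - k*((n:ℝ)+1)) := by
        have := mul_nonneg hkR0 hq2nn
        linarith
      nlinarith [mul_nonneg hp1 hp2, mul_pos hcR0 (sub_pos.mpr hr2), hk2q2]
    · have hsq : ((k:ℝ)*q2)^2 < ((k:ℝ)*((n:ℝ)+1) - s*c)^2 := by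
        nlinarith [hk2q2, mul_pos hcR0 (sub_pos.mpr hr2)]
      have hlt2 : (k:ℝ)*q2 < (k:ℝ)*((n:ℝ)+1) - s*c :=
        lt_of_pow_lt_pow_left₀ 2 (by linarith) hsq
      have hknq : (k:ℝ)*n ≤ (k:ℝ)*q2 := mul_le_mul_of_nonneg_left hnq2 hkR0
      have hsc : (s:ℝ) ≤ (s:ℝ)*c := le_mul_of_one_le_right (le_of_lt hsR0) hcR1
      linarith
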